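/- Let η, κ₁, κ₂ > 0 and let φ : ℝ → ℝ be C³ satisfying: lim_{x→-∞} φ(x) = 0; 0 ≤ φ'(x) ≤ κ₁·exp(√η·x); and |φ'''(x)| ≤ κ₂·φ'(x) for all x. Then φ''(x) → 0 as x → -∞ and |φ''(x)| ≤ κ₂·φ(x) for all x ∈ ℝ. -/

import Mathlib

theorem weight_second_derivative_transfer (η κ₁ κ₂ : ℝ) (hη : 0 < η) (hκ₁ : 0 < κ₁) (hκ₂ : 0 < κ₂)
    (φ : ℝ → ℝ) (hC3 : ContDiff ℝ 3 φ)
    (hlim : Filter.Tendsto φ Filter.atBot (nhds 0))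
    (hderiv : ∀ x : ℝ, 0 ≤ deriv φ x ∧ deriv φ x ≤ κ₁ * Real.exp (Real.sqrt η * x))
    (hthird : ∀ x : ℝ, |iteratedDeriv 3 φ x| ≤ κ₂ * deriv φ x) :
    Filter.Tendsto (deriv (deriv φ)) Filter.atBot (nhds 0) ∧
      ∀ x : ℝ, |deriv (deriv φ) x| ≤ κ₂ * φ x := by
  classical
  open Filter Real Set in
  -- notation
  set p := deriv φ with hp
  set q := deriv p with hq
  -- smoothness facts
  have hC2 : ContDiff ℝ 2 p := by
    have h3 : ContDiff ℝ (2+1) φ := by norm_num; exact hC3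
    exact (contDiff_succ_iff_deriv.mp h3).2.2
  have hC1 : ContDiff ℝ 1 q := by
    have h2 : ContDiff ℝ (1+1) p := by norm_num; exact hC2
    exact (contDiff_succ_iff_deriv.mp h2).2.2
  have hφd : Differentiable ℝ φ := hC3.differentiable (by norm_num)
  have hpd : Differentiable ℝ p := hC2.differentiable (by norm_num)
  have hqd : Differentiable ℝ q := hC1.differentiable (by norm_num)
  -- third derivative
  have hr : ∀ x, |deriv q x| ≤ κ₂ * p x := by
    intro x
    have : iteratedDeriv 3 φ = deriv q := by
      simp [hq, hp, iteratedDeriv_succ, iteratedDeriv_zero]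
    rw [← this]; exact hthird x
  -- φ is monotone, nonnegative
  have hφmono : Monotone φ := monotone_of_deriv_nonneg hφd fun x => (hderiv x).1
  have hφnonneg : ∀ x, 0 ≤ φ x :=
    fun x => le_of_tendsto hlim (eventually_atBot.mpr ⟨x, fun y hy => hφmono hy⟩)
  -- p → 0 at -∞
  have hp0 : Tendsto p atBot (nhds 0) := by
    have hlin : Tendsto (fun x : ℝ => Real.sqrt η * x) atBot atBot :=
      (tendsto_id (α := ℝ)).const_mul_atBot (Real.sqrt_pos.mpr hη)
    have hexp : Tendsto (fun x : ℝ => κ₁ * Real.exp (Real.sqrt η * x)) atBot (nhds 0) := by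
      have := (Real.tendsto_exp_atBot.comp hlin).const_mul κ₁
      simpa using this
    exact tendsto_of_tendsto_of_tendsto_of_le_of_le tendsto_const_nhds hexp
      (fun x => (hderiv x).1) (fun x => (hderiv x).2)
  -- the two monotone auxiliary functions
  set g : ℝ → ℝ := fun x => κ₂ * φ x - q x with hgdef
  set h : ℝ → ℝ := fun x => κ₂ * φ x + q x with hhdef
  have hgd : Differentiable ℝ g := (hφd.const_mul κ₂).sub hqd
  have hhd : Differentiable ℝ h := (hφd.const_mul κ₂).add hqd
  have hgderiv : ∀ x, deriv g x = κ₂ * p x - deriv q x := by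
    intro x
    rw [hgdef]
    rw [deriv_fun_sub ((hφd x).const_mul κ₂) (hqd x), deriv_const_mul κ₂ (hφd x)]
  have hhderiv : ∀ x, deriv h x = κ₂ * p x + deriv q x := by
    intro x
    rw [hhdef]
    rw [deriv_fun_add ((hφd x).const_mul κ₂) (hqd x), deriv_const_mul κ₂ (hφd x)]
  have hgmono : Monotone g := by
    apply monotone_of_deriv_nonneg hgd
    intro x
    rw [hgderiv x]
    have := hr x
    have := abs_le.mp this
    linarith [this.2]
  have hhmono : Monotone h := by
    apply monotone_of_deriv_nonneg hhd
    intro x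
    rw [hhderiv x]
    have := abs_le.mp (hr x)
    linarith [this.1]
  -- boundedness below
  have hsum : ∀ x, g x + h x = 2 * κ₂ * φ x := by intro x; simp [hgdef, hhdef]; ring
  have hgbdd : BddBelow (Set.range g) := by
    refine ⟨min (g 0) (-(h 0)), ?_⟩
    rintro _ ⟨x, rfl⟩
    rcases le_total x 0 with hx | hx
    · have h1 : h x ≤ h 0 := hhmono hx
      have h2 : 0 ≤ 2 * κ₂ * φ x := mul_nonneg (by positivity) (hφnonneg x)
      have := hsum x
      calc min (g 0) (-(h 0)) ≤ -(h 0) := min_le_right _ _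
        _ ≤ g x := by linarith
    · exact le_trans (min_le_left _ _) (hgmono hx)
  have hhbdd : BddBelow (Set.range h) := by
    refine ⟨min (h 0) (-(g 0)), ?_⟩
    rintro _ ⟨x, rfl⟩
    rcases le_total x 0 with hx | hx
    · have h1 : g x ≤ g 0 := hgmono hx
      have h2 : 0 ≤ 2 * κ₂ * φ x := mul_nonneg (by positivity) (hφnonneg x)
      have := hsum x
      calc min (h 0) (-(g 0)) ≤ -(g 0) := min_le_right _ _
        _ ≤ h x := by linarith
    · exact le_trans (min_le_left _ _) (hhmono hx)
  -- limits of g and h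
  have hga : Tendsto g atBot (nhds (⨅ x, g x)) := tendsto_atBot_ciInf hgmono hgbdd
  have hhb : Tendsto h atBot (nhds (⨅ x, h x)) := tendsto_atBot_ciInf hhmono hhbdd
  set a := ⨅ x, g x
  set b := ⨅ x, h x
  have hab : a + b = 0 := by
    have h1 : Tendsto (fun x => g x + h x) atBot (nhds (a + b)) := hga.add hhb
    have h2 : Tendsto (fun x => g x + h x) atBot (nhds 0) := by
      have := hlim.const_mul (2 * κ₂)
      simp only [mul_zero] at this
      exact this.congr fun x => (hsum x).symm
    exact tendsto_nhds_unique h1 h2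
  -- limit of q
  have hqL : Tendsto q atBot (nhds ((b - a) / 2)) := by
    have h1 : Tendsto (fun x => (h x - g x) / 2) atBot (nhds ((b - a) / 2)) :=
      (hhb.sub hga).div_const 2
    exact h1.congr fun x => by simp only [hgdef, hhdef]; ring
  set L := (b - a) / 2 with hLdef
  -- mean value theorem argument: L = 0
  have hmvt : ∀ x : ℝ, ∃ c ∈ Set.Ioo (x - 1) x, deriv p c = (p x - p (x - 1)) / (x - (x - 1)) := by
    intro x
    exact exists_deriv_eq_slope p (by linarith) (hpd.continuous.continuousOn)
      (hpd.differentiableOn)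
  choose c hc1 hc2 using hmvt
  have hctend : Tendsto c atBot atBot :=
    tendsto_atBot_mono (fun x => (hc1 x).2.le) tendsto_id
  have hL0 : L = 0 := by
    have h1 : Tendsto (fun x => q (c x)) atBot (nhds L) := hqL.comp hctend
    have h2 : Tendsto (fun x => q (c x)) atBot (nhds 0) := by
      have h3 : Tendsto (fun x : ℝ => p x - p (x - 1)) atBot (nhds (0 - 0)) := by
        refine hp0.sub (hp0.comp ?_)
        simpa [sub_eq_add_neg] using tendsto_atBot_add_const_right atBot (-1 : ℝ) (tendsto_id (α := ℝ))
      simp only [sub_zero] at h3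
      refine h3.congr fun x => ?_
      have := hc2 x
      simp only [sub_sub_cancel, div_one] at this
      exact this.symm
    exact tendsto_nhds_unique h1 h2
  have ha0 : a = 0 := by
    have : b - a = 0 := by
      have : (b - a) / 2 = 0 := hL0
      linarith
    linarith
  have hb0 : b = 0 := by linarith
  rw [ha0] at hga
  rw [hb0] at hhb
  -- conclusions
  constructor
  · rw [hLdef, ha0, hb0] at hqL; simpa using hqL
  · intro x
    have hgge : 0 ≤ g x :=
      le_of_tendsto hga (eventually_atBot.mpr ⟨x, fun y hy => hgmono hy⟩)
    have hhge : 0 ≤ h x :=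
      le_of_tendsto hhb (eventually_atBot.mpr ⟨x, fun y hy => hhmono hy⟩)
    rw [abs_le]
    constructor
    · simp only [hhdef] at hhge; linarith
    · simp only [hgdef] at hgge; linarith
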